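/- Let (X, π) be a finite symmetric two-player game with relative payoff game (X, Δ). If Δ is quasiconcave with respect to some linear order on X, then imitation is not subject to a money pump. -/
import Mathlib



/-- The imitator's action sequence: `y₀` initially; imitate the opponent's previous
action iff it earned a strictly positive relative payoff. -/
noncomputable def imitSeq {X : Type*} (Δ : X → X → ℝ) (x : ℕ → X) (y0 : X) : ℕ → X
  | 0 => y0
  | t + 1 => if 0 < Δ (x t) (imitSeq Δ x y0 t) then x t else imitSeq Δ x y0 t

/-- Imitation is not subject to a money pump: there is a uniform bound `M` on the sum
of the opponent's relative payoffs, for every initial action of the imitator, every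
opponent sequence, and every horizon. -/
def NoMoneyPump {X : Type*} (Δ : X → X → ℝ) : Prop :=
  ∃ M : ℝ, ∀ (y0 : X) (x : ℕ → X) (T : ℕ),
    ∑ t ∈ Finset.range (T + 1), Δ (x t) (imitSeq Δ x y0 t) ≤ M


section Aux


variable {X : Type*} [LinearOrder X] (Δ : X → X → ℝ)

/-- Single-peakedness kills a "middle" element beaten by one side while the
other side weakly beats that side. -/
lemma auxM (hskew : ∀ a b, Δ a b = - Δ b a)
    (hqc : ∀ y x x' x'', x < x' → x' < x'' → min (Δ x y) (Δ x'' y) ≤ Δ x' y)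
    (m p q : X) (hpos : (p < m ∧ m < q) ∨ (q < m ∧ m < p))
    (h1 : 0 ≤ Δ p q) (h2 : 0 < Δ q m) : False := by
  have hqq : Δ q q = 0 := by have := hskew q q; linarith
  have hmq : Δ m q < 0 := by have := hskew q m; linarith
  rcases hpos with ⟨ha, hb⟩ | ⟨ha, hb⟩
  · have := hqc q p m q ha hb
    have : (0:ℝ) ≤ Δ m q := le_trans (le_min h1 hqq.ge) this
    linarith
  · have := hqc q q m p ha hb
    have : (0:ℝ) ≤ Δ m q := le_trans (le_min hqq.ge h1) this
    linarith

/-- In a strictly improving path `a → b → c` whose "skip" is weakly losing,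
`c` lies strictly between `a` and `b`. -/
lemma auxT (hskew : ∀ a b, Δ a b = - Δ b a)
    (hqc : ∀ y x x' x'', x < x' → x' < x'' → min (Δ x y) (Δ x'' y) ≤ Δ x' y)
    (a b c : X) (h1 : 0 < Δ b a) (h2 : 0 < Δ c b) (h3 : Δ c a ≤ 0) :
    (a < c ∧ c < b) ∨ (b < c ∧ c < a) := by
  have hca : 0 ≤ Δ a c := by have := hskew c a; linarith
  rcases lt_trichotomy a b with hab | hab | hab
  · left
    rcases lt_trichotomy c a with h | h | h
    · exact absurd (auxM Δ hskew hqc a c b (Or.inl ⟨h, hab⟩) h2.le h1) not_false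
    · exfalso; rw [h] at h2; have := hskew b a; linarith
    · refine ⟨h, ?_⟩
      rcases lt_trichotomy c b with h' | h' | h'
      · exact h'
      · exfalso; rw [h'] at h2; have := hskew b b; linarith
      · exact absurd (auxM Δ hskew hqc b a c (Or.inl ⟨hab, h'⟩) hca h2) not_false
  · subst hab; have : Δ a a = 0 := by have := hskew a a; linarith
    linarith
  · right
    rcases lt_trichotomy a c with h | h | h
    · exact absurd (auxM Δ hskew hqc a c b (Or.inr ⟨hab, h⟩) h2.le h1) not_false
    · exfalso; rw [← h] at h2; have := hskew b a; linarith
    · refine ⟨?_, h⟩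
      rcases lt_trichotomy b c with h' | h' | h'
      · exact h'
      · exfalso; rw [← h'] at h2; have := hskew b b; linarith
      · exact absurd (auxM Δ hskew hqc b a c (Or.inr ⟨h', hab⟩) hca h2) not_false

/-- No strictly improving cycle exists. -/
lemma auxNoCycle (hskew : ∀ a b, Δ a b = - Δ b a)
    (hqc : ∀ y x x' x'', x < x' → x' < x'' → min (Δ x y) (Δ x'' y) ≤ Δ x' y) :
    ∀ n : ℕ, ∀ c : ℕ → X, (∀ i < n + 2, 0 < Δ (c (i+1)) (c i)) → c (n+2) = c 0 → False := by
  intro n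
  induction n using Nat.strong_induction_on with
  | _ n IH =>
    match n with
    | 0 =>
      intro c himp hcyc
      have h0 := himp 0 (by omega)
      have h1 := himp 1 (by omega)
      rw [hcyc] at h1
      have := hskew (c 1) (c 0)
      linarith
    | (k+1) =>
      intro c himp hcyc
      -- interior skips are weakly losing
      have hskip : ∀ i, i + 2 ≤ k + 3 → Δ (c (i+2)) (c i) ≤ 0 := by
        intro i hi
        by_contra hpos
        push_neg at hpos
        set d : ℕ → X := fun j => if j ≤ i then c j else c (j+1) with hdd
        have hdv : ∀ j, d j = if j ≤ i then c j else c (j+1) := fun j => rfl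
        refine IH k (by omega) d ?_ ?_
        · intro j hj
          rw [hdv, hdv]
          rcases lt_trichotomy j i with h | h | h
          · rw [if_pos h.le, if_pos (by omega)]
            exact himp j (by omega)
          · subst h
            rw [if_pos le_rfl, if_neg (by omega)]
            exact hpos
          · rw [if_neg (by omega), if_neg (by omega)]
            exact himp (j+1) (by omega)
        · rw [hdv, hdv, if_neg (by omega), if_pos (by omega)]
          rw [show k + 2 + 1 = k + 3 from rfl]
          rw [show k + 1 + 2 = k + 3 from by omega] at hcyc
          exact hcyc
      -- the wrap-around skip is weakly losing
      have hwrap : Δ (c 1) (c (k+2)) ≤ 0 := by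
        by_contra hpos
        push_neg at hpos
        set d : ℕ → X := fun j => if j ≤ k + 1 then c (j+1) else c 1 with hdd
        have hdv : ∀ j, d j = if j ≤ k + 1 then c (j+1) else c 1 := fun j => rfl
        refine IH k (by omega) d ?_ ?_
        · intro j hj
          rw [hdv, hdv]
          rcases lt_trichotomy j (k+1) with h | h | h
          · rw [if_pos h.le, if_pos (by omega)]
            exact himp (j+1) (by omega)
          · subst h
            rw [if_pos le_rfl, if_neg (by omega)]
            exact hpos
          · omega
        · rw [hdv, hdv, if_neg (by omega), if_pos (by omega)]
      -- betweenness for interior triples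
      have hbet : ∀ i, i + 2 ≤ k + 3 →
          (c i < c (i+2) ∧ c (i+2) < c (i+1)) ∨ (c (i+1) < c (i+2) ∧ c (i+2) < c i) :=
        fun i hi => auxT Δ hskew hqc _ _ _ (himp i (by omega)) (himp (i+1) (by omega)) (hskip i hi)
      -- betweenness for the wrap-around triple
      have hbetw : (c (k+2) < c 1 ∧ c 1 < c 0) ∨ (c 0 < c 1 ∧ c 1 < c (k+2)) := by
        have h1 : 0 < Δ (c (k+3)) (c (k+2)) := himp (k+2) (by omega)
        have h2 : 0 < Δ (c 1) (c (k+3)) := by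
          rw [show k + 1 + 2 = k + 3 from by omega] at hcyc
          rw [hcyc]; exact himp 0 (by omega)
        have := auxT Δ hskew hqc _ _ _ h1 h2 hwrap
        rw [show k + 1 + 2 = k + 3 from by omega] at hcyc
        rw [hcyc] at this
        exact this
      -- take the maximum element of the cycle
      obtain ⟨k0, hk0mem, hk0max⟩ :=
        Finset.exists_max_image (Finset.range (k+3)) c ⟨0, Finset.mem_range.mpr (by omega)⟩
      rw [Finset.mem_range] at hk0mem
      have hle : ∀ j, j < k + 3 → c j ≤ c k0 := fun j hj => hk0max j (Finset.mem_range.mpr hj)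
      match k0, hk0mem with
      | 0, _ =>
        have hb := hbet (k+1) le_rfl
        rw [show k + 1 + 2 = k + 3 from by omega, hcyc] at hb
        rcases hb with ⟨h1, h2⟩ | ⟨h1, h2⟩
        · exact absurd (hle (k+1+1) (by omega)) (not_le.mpr h2)
        · exact absurd (hle (k+1) (by omega)) (not_le.mpr h2)
      | 1, _ =>
        rcases hbetw with ⟨h1, h2⟩ | ⟨h1, h2⟩
        · exact absurd (hle 0 (by omega)) (not_le.mpr h2)
        · exact absurd (hle (k+2) (by omega)) (not_le.mpr h2)
      | (j+2), hj =>
        have hb := hbet j (by omega)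
        rcases hb with ⟨h1, h2⟩ | ⟨h1, h2⟩
        · exact absurd (hle (j+1) (by omega)) (not_le.mpr h2)
        · exact absurd (hle j (by omega)) (not_le.mpr h2)

end Aux

section Aux2

variable {X : Type*} (Δ : X → X → ℝ)

/-- From a transitive-closure step, extract an explicit strictly improving chain. -/
lemma auxExtract {x y : X}
    (h : Relation.TransGen (fun a b => 0 < Δ b a) x y) :
    ∃ n, ∃ c : ℕ → X, c 0 = x ∧ c (n+1) = y ∧ ∀ i < n + 1, 0 < Δ (c (i+1)) (c i) := by
  induction h with
  | single hxy =>
    refine ⟨0, fun i => if i = 0 then x else _, if_pos rfl, if_neg one_ne_zero, ?_⟩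
    intro i hi
    interval_cases i
    simpa using hxy
  | @tail b z _ hbz ih =>
    obtain ⟨n, d, h0, h1, h2⟩ := ih
    refine ⟨n+1, fun i => if i ≤ n + 1 then d i else z, ?_, ?_, ?_⟩
    · show (if (0:ℕ) ≤ n + 1 then d 0 else z) = x
      rw [if_pos (by omega)]; exact h0
    · show (if n + 1 + 1 ≤ n + 1 then d (n+1+1) else z) = z
      rw [if_neg (by omega)]
    · intro i hi
      show 0 < Δ (if i + 1 ≤ n + 1 then d (i+1) else z) (if i ≤ n + 1 then d i else z)
      rcases lt_trichotomy i (n+1) with h | h | h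
      · rw [if_pos (by omega), if_pos (by omega)]
        exact h2 i h
      · subst h
        rw [if_neg (by omega), if_pos le_rfl, h1]
        exact hbz
      · omega

end Aux2

theorem stmt15 {X : Type*} [Fintype X] [Nonempty X]
    (π : X → X → ℝ) (Δ : X → X → ℝ) (hΔ : ∀ x y, Δ x y = π x y - π y x)
    (hqc : ∃ l : LinearOrder X, ∀ y x x' x'' : X,
      l.lt x x' → l.lt x' x'' → min (Δ x y) (Δ x'' y) ≤ Δ x' y) :
    NoMoneyPump Δ := by
  classical
  obtain ⟨l, hl⟩ := hqc
  letI := l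
  have hskew : ∀ a b, Δ a b = - Δ b a := by intro a b; rw [hΔ, hΔ]; ring
  have hqc' : ∀ y x x' x'' : X, x < x' → x' < x'' → min (Δ x y) (Δ x'' y) ≤ Δ x' y := hl
  -- irreflexivity of the transitive closure of the "beats" relation
  have hirr : ∀ z : X, ¬ Relation.TransGen (fun a b => 0 < Δ b a) z z := by
    intro z hz
    obtain ⟨n, c, h0, h1, h2⟩ := auxExtract Δ hz
    match n with
    | 0 =>
      have := h2 0 (by omega)
      rw [h0, h1] at this
      have := hskew z z
      linarith
    | (m+1) =>
      exact auxNoCycle Δ hskew hqc' m c h2 (h1.trans h0.symm)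
  -- the rank function
  set r : X → ℕ := fun y =>
    (Finset.univ.filter (fun z => Relation.TransGen (fun a b => 0 < Δ b a) z y)).card with hr
  have hstep : ∀ a b : X, 0 < Δ b a → r a < r b := by
    intro a b hab
    apply Finset.card_lt_card
    rw [Finset.ssubset_iff_of_subset]
    · exact ⟨a, Finset.mem_filter.mpr ⟨Finset.mem_univ a, Relation.TransGen.single hab⟩,
        fun hmem => hirr a (Finset.mem_filter.mp hmem).2⟩
    · intro z hz
      rw [Finset.mem_filter] at hz ⊢
      exact ⟨hz.1, hz.2.tail hab⟩
  have hrle : ∀ a : X, r a ≤ Fintype.card X := fun a =>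
    le_trans (Finset.card_filter_le _ _) (le_of_eq (Finset.card_univ))
  -- the uniform bound
  obtain ⟨x0⟩ := ‹Nonempty X›
  set C : ℝ := Finset.univ.sup' Finset.univ_nonempty (fun p : X × X => Δ p.1 p.2) with hC
  have hCle : ∀ a b : X, Δ a b ≤ C := fun a b =>
    Finset.le_sup' (fun p : X × X => Δ p.1 p.2) (Finset.mem_univ (a, b))
  have hC0 : (0:ℝ) ≤ C := by
    have := hCle x0 x0
    have h00 : Δ x0 x0 = 0 := by have := hskew x0 x0; linarith
    linarith
  refine ⟨C * Fintype.card X, fun y0 x T => ?_⟩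
  have hmain : ∀ T : ℕ,
      ∑ t ∈ Finset.range T, Δ (x t) (imitSeq Δ x y0 t) ≤ C * (r (imitSeq Δ x y0 T) : ℝ) := by
    intro T
    induction T with
    | zero =>
      simp only [Finset.range_zero, Finset.sum_empty]
      exact mul_nonneg hC0 (Nat.cast_nonneg _)
    | succ T IH =>
      rw [Finset.sum_range_succ]
      have hsucc : imitSeq Δ x y0 (T+1) =
          if 0 < Δ (x T) (imitSeq Δ x y0 T) then x T else imitSeq Δ x y0 T := rfl
      by_cases hpos : 0 < Δ (x T) (imitSeq Δ x y0 T)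
      · rw [hsucc, if_pos hpos]
        have h1 : (r (imitSeq Δ x y0 T) : ℝ) + 1 ≤ (r (x T) : ℝ) := by
          have := hstep (imitSeq Δ x y0 T) (x T) hpos
          exact_mod_cast this
        have h2 : C * ((r (imitSeq Δ x y0 T) : ℝ) + 1) ≤ C * (r (x T) : ℝ) :=
          mul_le_mul_of_nonneg_left h1 hC0
        have h3 := hCle (x T) (imitSeq Δ x y0 T)
        nlinarith [IH]
      · rw [hsucc, if_neg hpos]
        push_neg at hpos
        linarith [IH]
  calc ∑ t ∈ Finset.range (T + 1), Δ (x t) (imitSeq Δ x y0 t)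
      ≤ C * (r (imitSeq Δ x y0 (T+1)) : ℝ) := hmain (T+1)
    _ ≤ C * Fintype.card X := by
        apply mul_le_mul_of_nonneg_left _ hC0
        exact_mod_cast hrle _
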